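/- Let Φ = φ^ω(0) be the fixed point of the morphism φ(0)=01202120102120210, φ(1)=12010201210201021, φ(2)=20121012021012102, and let w be a nonempty suffix of φ(1) or of φ(2) with |w| < 17. Then the infinite word w·Φ is square-free. -/

import Mathlib

/-- A word has a square if some nonempty `u` with `u ++ u` an infix. -/
def HasSquare (w : List (Fin 3)) : Prop :=
  ∃ u : List (Fin 3), u ≠ [] ∧ (u ++ u) <:+: w

def SquareFree (w : List (Fin 3)) : Prop := ¬ HasSquare w

/-- `u` occurs as a factor of the infinite word `x`. -/
def InfFactor (u : List (Fin 3)) (x : ℕ → Fin 3) : Prop :=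
  ∃ m : ℕ, ∀ i < u.length, u.getD i 0 = x (m + i)

def InfSquareFree (x : ℕ → Fin 3) : Prop :=
  ¬ ∃ u : List (Fin 3), u ≠ [] ∧ InfFactor (u ++ u) x

/-- A square-free word is irreducibly square-free if deleting any interior
letter creates a square. -/
def IrrSF (w : List (Fin 3)) : Prop :=
  SquareFree w ∧
    ∀ (w1 w2 : List (Fin 3)) (a : Fin 3),
      w = w1 ++ [a] ++ w2 → w1 ≠ [] → w2 ≠ [] → HasSquare (w1 ++ w2)

/-- The uniform morphism φ of length 17. -/
def phi : Fin 3 → List (Fin 3) := ![[0,1,2,0,2,1,2,0,1,0,2,1,2,0,2,1,0], [1,2,0,1,0,2,0,1,2,1,0,2,0,1,0,2,1], [2,0,1,2,1,0,1,2,0,2,1,0,1,2,1,0,2]]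

def phiW (w : List (Fin 3)) : List (Fin 3) := w.flatMap phi

/-- The infinite fixed point `Φ = φ^ω(0)`. -/
def Phi (n : ℕ) : Fin 3 := ((phiW^[n+1]) [0]).getD n 0

/-- Prepend a finite word to an infinite word. -/
def prepend (w : List (Fin 3)) (x : ℕ → Fin 3) (n : ℕ) : Fin 3 :=
  if n < w.length then w.getD n 0 else x (n - w.length)

/-! ### Auxiliary infrastructure -/

lemma phi_len (c : Fin 3) : (phi c).length = 17 := by fin_cases c <;> rfl

lemma phiW_cons (a : Fin 3) (l : List (Fin 3)) : phiW (a :: l) = phi a ++ phiW l := List.flatMap_cons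

lemma phiW_append (l l' : List (Fin 3)) : phiW (l ++ l') = phiW l ++ phiW l' :=
  List.flatMap_append

lemma phiW_len (l : List (Fin 3)) : (phiW l).length = 17 * l.length := by
  induction l with
  | nil => simp [phiW]
  | cons a l ih => rw [phiW_cons, List.length_append, phi_len, ih, List.length_cons]; ring

lemma getD_phiW : ∀ (l : List (Fin 3)) (q r : ℕ), q < l.length → r < 17 →
    (phiW l).getD (17 * q + r) 0 = (phi (l.getD q 0)).getD r 0 := by
  intro l
  induction l with
  | nil => intro q r hq; simp at hq
  | cons a l ih =>
    intro q r hq hr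
    cases q with
    | zero =>
      rw [phiW_cons]
      simp only [Nat.mul_zero, Nat.zero_add]
      rw [List.getD_append _ _ _ _ (by rw [phi_len]; exact hr)]
      rfl
    | succ q =>
      rw [phiW_cons]
      have h17 : 17 * (q + 1) + r = 17 + (17 * q + r) := by ring
      rw [h17, List.getD_append_right _ _ _ _ (by rw [phi_len]; omega)]
      rw [phi_len]
      have : 17 + (17 * q + r) - 17 = 17 * q + r := by omega
      rw [this]
      exact ih q r (by simpa using hq) hr

def Pk (k : ℕ) : List (Fin 3) := phiW^[k] [0]

lemma Pk_succ (k : ℕ) : Pk (k + 1) = phiW (Pk k) := Function.iterate_succ_apply' phiW k [0]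

lemma Pk_len (k : ℕ) : (Pk k).length = 17 ^ k := by
  induction k with
  | zero => rfl
  | succ k ih => rw [Pk_succ, phiW_len, ih, pow_succ]; ring

lemma prefix_phiW {l l' : List (Fin 3)} (h : l <+: l') : phiW l <+: phiW l' := by
  obtain ⟨t, rfl⟩ := h
  rw [phiW_append]
  exact ⟨phiW t, rfl⟩

lemma Pk_prefix_succ (k : ℕ) : Pk k <+: Pk (k + 1) := by
  induction k with
  | zero =>
    show Pk 0 <+: Pk 1
    have : Pk 0 = [0] := rfl
    have h1 : Pk 1 = phi 0 := by simp [Pk, phiW]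
    rw [this, h1]
    decide
  | succ k ih =>
    rw [Pk_succ, Pk_succ]
    exact prefix_phiW ih

lemma Pk_mono {j k : ℕ} (h : j ≤ k) : Pk j <+: Pk k := by
  induction k with
  | zero => simp_all
  | succ k ih =>
    rcases Nat.lt_or_ge j (k + 1) with h1 | h1
    · exact (ih (by omega)).trans (Pk_prefix_succ k)
    · have : j = k + 1 := by omega
      subst this; exact List.prefix_refl _

lemma getD_of_prefix {l l' : List (Fin 3)} {n : ℕ} (h : l <+: l') (hn : n < l.length) :
    l.getD n 0 = l'.getD n 0 := by
  obtain ⟨t, rfl⟩ := h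
  rw [List.getD_append _ _ _ _ hn]

lemma Phi_eq (k n : ℕ) (h : n < 17 ^ k) : Phi n = (Pk k).getD n 0 := by
  have hdef : Phi n = (Pk (n + 1)).getD n 0 := rfl
  have hn1 : n < 17 ^ (n + 1) := by
    calc n < 2 ^ n := Nat.lt_two_pow_self
    _ ≤ 17 ^ n := Nat.pow_le_pow_left (by norm_num) n
    _ ≤ 17 ^ (n + 1) := Nat.pow_le_pow_right (by norm_num) (by omega)
  rcases le_total (n + 1) k with h1 | h1
  · rw [hdef]; exact getD_of_prefix (Pk_mono h1) (by rw [Pk_len]; exact hn1)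
  · rw [hdef]; exact (getD_of_prefix (Pk_mono h1) (by rw [Pk_len]; exact h)).symm

lemma Phi_block (q r : ℕ) (hr : r < 17) : Phi (17 * q + r) = (phi (Phi q)).getD r 0 := by
  have hq : q < 17 ^ q := by
    calc q < 2 ^ q := Nat.lt_two_pow_self
    _ ≤ 17 ^ q := Nat.pow_le_pow_left (by norm_num) q
  have h2 : 17 * q + r < 17 ^ (q + 1) := by
    have : 17 * q + r < 17 * (q + 1) := by omega
    calc 17 * q + r < 17 * (q + 1) := this
    _ ≤ 17 * 17 ^ q := by
        have := Nat.mul_le_mul_left 17 (by omega : q + 1 ≤ 17 ^ q)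
        omega
    _ = 17 ^ (q + 1) := by rw [pow_succ]; ring
  rw [Phi_eq (q + 1) _ h2, Pk_succ, getD_phiW (Pk q) q r (by rw [Pk_len]; exact hq) hr,
    ← Phi_eq q q hq]

lemma Phi_mod (n : ℕ) : Phi n = (phi (Phi (n / 17))).getD (n % 17) 0 := by
  conv_lhs => rw [← Nat.div_add_mod n 17]
  exact Phi_block _ _ (Nat.mod_lt _ (by norm_num))

lemma lastP : ∀ c : Fin 3, (phi c).getD 16 0 = c := by decide
lemma firstP : ∀ c : Fin 3, (phi c).getD 0 0 = c := by decide

lemma Phi_last (q : ℕ) : Phi (17 * q + 16) = Phi q := by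
  rw [Phi_block q 16 (by norm_num), lastP]

/-! ### Alignment -/

lemma FA : ∀ b c d : Fin 3, ∀ t < 17,
    (∀ r < 17, (phi b).getD r 0 = (phi c ++ phi d).getD (t + r) 0) → t = 0 ∧ b = c := by
  decide

lemma align (x y : ℕ → Fin 3) (hy : ∀ n, y n = (phi (x (n / 17))).getD (n % 17) 0)
    (b : Fin 3) (p : ℕ) (hm : ∀ r < 17, (phi b).getD r 0 = y (p + r)) :
    p % 17 = 0 ∧ b = x (p / 17) := by
  have hdm := Nat.div_add_mod p 17
  set j := p / 17 with hj
  set t := p % 17 with ht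
  have htl : t < 17 := Nat.mod_lt _ (by norm_num)
  have key : ∀ r < 17, (phi b).getD r 0 = (phi (x j) ++ phi (x (j + 1))).getD (t + r) 0 := by
    intro r hr
    rw [hm r hr, hy (p + r)]
    rcases Nat.lt_or_ge (t + r) 17 with hc | hc
    · have h1 : p + r = 17 * j + (t + r) := by omega
      have hdiv : (p + r) / 17 = j := by omega
      have hmod : (p + r) % 17 = t + r := by omega
      rw [hdiv, hmod, List.getD_append _ _ _ _ (by rw [phi_len]; exact hc)]
    · have h1 : p + r = 17 * (j + 1) + (t + r - 17) := by omega
      have hdiv : (p + r) / 17 = j + 1 := by omega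
      have hmod : (p + r) % 17 = t + r - 17 := by omega
      rw [hdiv, hmod, List.getD_append_right _ _ _ _ (by rw [phi_len]; exact hc), phi_len]
  exact FA b (x j) (x (j + 1)) t htl key

/-! ### Square descent -/

lemma desc (x y : ℕ → Fin 3) (hy : ∀ n, y n = (phi (x (n / 17))).getD (n % 17) 0)
    (m l : ℕ) (hl : 33 ≤ l) (h : ∀ i < l, y (m + i) = y (m + l + i)) :
    ∃ s, l = 17 * s ∧ ∀ k < s, x (m / 17 + k) = x (m / 17 + s + k) := by
  have ylast : ∀ k, y (17 * k + 16) = x k := by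
    intro k
    rw [hy]
    have hdiv : (17 * k + 16) / 17 = k := by omega
    have hmod : (17 * k + 16) % 17 = 16 := by omega
    rw [hdiv, hmod, lastP]
  have hdm := Nat.div_add_mod m 17
  have hml : m % 17 < 17 := Nat.mod_lt _ (by norm_num)
  set k0 := (m + 16) / 17 with hk0
  have hdm0 := Nat.div_add_mod (m + 16) 17
  have hml0 : (m + 16) % 17 < 17 := Nat.mod_lt _ (by norm_num)
  have hk0a : m ≤ 17 * k0 := by omega
  have hk0b : 17 * k0 ≤ m + 16 := by omega
  -- 17 ∣ l
  have hmatch : ∀ r < 17, (phi (x k0)).getD r 0 = y (17 * k0 + l + r) := by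
    intro r hr
    have h1 : (phi (x k0)).getD r 0 = y (17 * k0 + r) := by
      rw [hy]
      have hdiv : (17 * k0 + r) / 17 = k0 := by omega
      have hmod : (17 * k0 + r) % 17 = r := by omega
      rw [hdiv, hmod]
    rw [h1]
    have hi : 17 * k0 + r - m < l := by omega
    have := h (17 * k0 + r - m) hi
    have e1 : m + (17 * k0 + r - m) = 17 * k0 + r := by omega
    have e2 : m + l + (17 * k0 + r - m) = 17 * k0 + l + r := by omega
    rw [e1, e2] at this
    exact this
  obtain ⟨hp0, -⟩ := align x y hy (x k0) (17 * k0 + l) hmatch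
  have hdvd : l % 17 = 0 := by omega
  refine ⟨l / 17, by omega, ?_⟩
  intro k hk
  set n := 17 * (m / 17 + k) + 16 with hn
  have hbound1 : m ≤ n := by omega
  have hbound2 : n < m + l := by
    have : 17 * k ≤ 17 * (l / 17) - 17 := by omega
    omega
  have hz := h (n - m) (by omega)
  have e1 : m + (n - m) = n := by omega
  have e2 : m + l + (n - m) = n + l := by omega
  rw [e1, e2] at hz
  have e3 : n + l = 17 * (m / 17 + l / 17 + k) + 16 := by omega
  rw [hn] at hz
  rw [e3, ylast, ylast] at hz
  exact hz

/-! ### Squares in Φ -/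

lemma phi_ne_adj : ∀ c : Fin 3, ∀ e < 16, (phi c).getD e 0 ≠ (phi c).getD (e + 1) 0 := by
  decide

lemma L1 : ∀ m, Phi m ≠ Phi (m + 1) := by
  intro m
  induction m using Nat.strong_induction_on with
  | _ m ih =>
    have hdm := Nat.div_add_mod m 17
    have hml : m % 17 < 17 := Nat.mod_lt _ (by norm_num)
    rcases Nat.lt_or_ge (m % 17) 16 with he | he
    · have h1 : Phi m = (phi (Phi (m / 17))).getD (m % 17) 0 := Phi_mod m
      have h2 : Phi (m + 1) = (phi (Phi (m / 17))).getD (m % 17 + 1) 0 := by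
        have e : m + 1 = 17 * (m / 17) + (m % 17 + 1) := by omega
        rw [e, Phi_block _ _ (by omega)]
      rw [h1, h2]
      exact phi_ne_adj _ _ he
    · have he16 : m % 17 = 16 := by omega
      have h1 : Phi m = Phi (m / 17) := by
        have e : m = 17 * (m / 17) + 16 := by omega
        conv_lhs => rw [e]
        exact Phi_last _
      have h2 : Phi (m + 1) = Phi (m / 17 + 1) := by
        have e : m + 1 = 17 * (m / 17 + 1) + 0 := by omega
        rw [e, Phi_block _ _ (by norm_num), firstP]
      rw [h1, h2]
      exact ih (m / 17) (by omega)

lemma take_eq_of_zone (w : List (Fin 3)) (o l : ℕ) (hle : o + l + l ≤ w.length)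
    (h : ∀ i < l, w.getD (o + i) 0 = w.getD (o + l + i) 0) :
    (w.drop o).take l = (w.drop (o + l)).take l := by
  apply List.ext_getElem
  · simp only [List.length_take, List.length_drop]; omega
  · intro i h1 h2
    have hi : i < l := by
      simp only [List.length_take, List.length_drop] at h1; omega
    have hb1 : o + i < w.length := by omega
    have hb2 : o + l + i < w.length := by omega
    rw [List.getElem_take, List.getElem_drop, List.getElem_take, List.getElem_drop]
    have := h i hi
    rwa [List.getD_eq_getElem w 0 hb1, List.getD_eq_getElem w 0 hb2] at this

set_option maxHeartbeats 4000000 in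
lemma C5 : ∀ g0 g1 g2 g3 g4 : Fin 3, g0 ≠ g1 → g1 ≠ g2 → g2 ≠ g3 → g3 ≠ g4 →
    ∀ o < 17, ∀ l < 33, 2 ≤ l →
      ((phiW [g0,g1,g2,g3,g4]).drop o).take l ≠ ((phiW [g0,g1,g2,g3,g4]).drop (o + l)).take l := by
  decide +kernel

lemma PhiSF : ∀ l, 1 ≤ l → ∀ m, ¬ (∀ i < l, Phi (m + i) = Phi (m + l + i)) := by
  intro l
  induction l using Nat.strong_induction_on with
  | _ l ih =>
    intro hl m h
    rcases Nat.lt_or_ge l 2 with hl2 | hl2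
    · -- l = 1
      have hl1 : l = 1 := by omega
      subst hl1
      have := h 0 (by norm_num)
      simp only [Nat.add_zero] at this
      exact L1 m this
    rcases Nat.lt_or_ge l 33 with hl33 | hl33
    · -- 2 ≤ l ≤ 32 : finite check
      set d := m / 17 with hd
      set o := m % 17 with ho
      have hdm := Nat.div_add_mod m 17
      have hml : o < 17 := Nat.mod_lt _ (by norm_num)
      set g : List (Fin 3) := [Phi d, Phi (d+1), Phi (d+2), Phi (d+3), Phi (d+4)] with hg
      have bridge : ∀ n < 85, Phi (17 * d + n) = (phiW g).getD n 0 := by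
        intro n hn
        have hj : n / 17 < 5 := by omega
        have hr : n % 17 < 17 := Nat.mod_lt _ (by norm_num)
        have hgj : g.getD (n / 17) 0 = Phi (d + n / 17) := by
          have h5 : n / 17 = 0 ∨ n / 17 = 1 ∨ n / 17 = 2 ∨ n / 17 = 3 ∨ n / 17 = 4 := by omega
          rcases h5 with h5 | h5 | h5 | h5 | h5 <;> rw [h5] <;> rfl
        have hright : (phiW g).getD n 0 = (phi (Phi (d + n / 17))).getD (n % 17) 0 := by
          conv_lhs => rw [show n = 17 * (n / 17) + n % 17 from by omega]
          rw [getD_phiW g _ _ (by simpa [hg] using hj) hr, hgj]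
        rw [hright]
        have e : 17 * d + n = 17 * (d + n / 17) + n % 17 := by omega
        rw [e, Phi_block _ _ hr]
      have hzone : ∀ i < l, (phiW g).getD (o + i) 0 = (phiW g).getD (o + l + i) 0 := by
        intro i hi
        rw [← bridge (o + i) (by omega), ← bridge (o + l + i) (by omega)]
        have e1 : 17 * d + (o + i) = m + i := by omega
        have e2 : 17 * d + (o + l + i) = m + l + i := by omega
        rw [e1, e2]
        exact h i hi
      have heq := take_eq_of_zone (phiW g) o l (by rw [phiW_len]; simp [hg]; omega) hzone
      exact C5 (Phi d) (Phi (d+1)) (Phi (d+2)) (Phi (d+3)) (Phi (d+4))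
        (L1 d) (L1 (d+1)) (L1 (d+2)) (L1 (d+3))
        o hml l hl33 hl2 heq
    · -- l ≥ 33 : descent
      obtain ⟨s, hls, hz⟩ := desc Phi Phi Phi_mod m l hl33 h
      exact ih s (by omega) (by omega) (m / 17) hz

/-! ### No prefix p·a·p with a ∈ {1,2} -/

lemma Phi289 (n : ℕ) (h : n < 289) : Phi n = (Pk 2).getD n 0 :=
  Phi_eq 2 n (by rw [show (17:ℕ) ^ 2 = 289 from by norm_num]; exact h)

lemma C6 : ∀ s < 18, 1 ≤ s →
    ((Pk 2).getD (s - 1) 0 = 1 ∨ (Pk 2).getD (s - 1) 0 = 2) →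
    ∃ j < s - 1, (Pk 2).getD j 0 ≠ (Pk 2).getD (j + s) 0 := by
  decide +kernel

lemma PAP : ∀ s, 1 ≤ s → ∀ a : Fin 3, (a = 1 ∨ a = 2) → Phi (s - 1) = a →
    (∀ j, j + 1 < s → Phi j = Phi (j + s)) → False := by
  intro s
  induction s using Nat.strong_induction_on with
  | _ s ih =>
    intro hs a ha hlast hz
    rcases Nat.lt_or_ge s 18 with hs18 | hs18
    · -- finite check
      have hP : (Pk 2).getD (s - 1) 0 = 1 ∨ (Pk 2).getD (s - 1) 0 = 2 := by
        rw [← Phi289 (s - 1) (by omega), hlast]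
        exact ha
      obtain ⟨j, hj, hne⟩ := C6 s hs18 hs hP
      apply hne
      rw [← Phi289 j (by omega), ← Phi289 (j + s) (by omega)]
      exact hz j (by omega)
    · -- descent
      have hmatch : ∀ r < 17, (phi (Phi 0)).getD r 0 = Phi (s + r) := by
        intro r hr
        have h1 : Phi r = (phi (Phi 0)).getD r 0 := by
          have e : r = 17 * 0 + r := by omega
          conv_lhs => rw [e]
          exact Phi_block 0 r hr
        rw [← h1]
        have := hz r (by omega)
        rwa [Nat.add_comm r s] at this
      obtain ⟨hp, -⟩ := align Phi Phi Phi_mod (Phi 0) s hmatch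
      set s' := s / 17 with hs'
      have hdm := Nat.div_add_mod s 17
      have hs17 : s = 17 * s' := by omega
      have hs'2 : 2 ≤ s' := by omega
      apply ih s' (by omega) (by omega) a ha
      · -- Phi (s' - 1) = a
        have e : s - 1 = 17 * (s' - 1) + 16 := by omega
        rw [e, Phi_last] at hlast
        exact hlast
      · intro j hj
        have h1 : Phi (17 * j + 16) = Phi (17 * j + 16 + s) := hz (17 * j + 16) (by omega)
        have e : 17 * j + 16 + s = 17 * (j + s') + 16 := by omega
        rw [e, Phi_last, Phi_last] at h1
        exact h1

/-! ### The word φ(a)·Φ -/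

set_option maxHeartbeats 1000000 in
lemma C7 : ∀ a : Fin 3, (a = 1 ∨ a = 2) → ∀ o < 17, ∀ l < 33, 1 ≤ l →
    ((phi a ++ Pk 2).drop o).take l ≠ ((phi a ++ Pk 2).drop (o + l)).take l := by
  decide +kernel

lemma A_getD (a : Fin 3) (n : ℕ) (hn : n ≤ 80) :
    prepend (phi a) Phi n = (phi a ++ Pk 2).getD n 0 := by
  unfold prepend
  rw [phi_len]
  rcases Nat.lt_or_ge n 17 with hc | hc
  · rw [if_pos hc, List.getD_append _ _ _ _ (by rw [phi_len]; exact hc)]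
  · rw [if_neg (by omega), List.getD_append_right _ _ _ _ (by rw [phi_len]; exact hc), phi_len]
    exact Phi289 _ (by omega)

lemma hyA (a : Fin 3) :
    ∀ n, prepend (phi a) Phi n = (phi (prepend [a] Phi (n / 17))).getD (n % 17) 0 := by
  intro n
  unfold prepend
  rw [phi_len]
  rcases Nat.lt_or_ge n 17 with hc | hc
  · rw [if_pos hc]
    have hdiv : n / 17 = 0 := by omega
    have hmod : n % 17 = n := by omega
    rw [hdiv, hmod]
    norm_num
  · rw [if_neg (by omega)]
    have hd1 : 1 ≤ n / 17 := by omega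
    have : (if n / 17 < [a].length then [a].getD (n / 17) 0 else Phi (n / 17 - [a].length))
        = Phi (n / 17 - 1) := by
      rw [if_neg (by simp; omega)]
      simp
    rw [this]
    have e : n - 17 = 17 * (n / 17 - 1) + n % 17 := by omega
    rw [e, Phi_block _ _ (Nat.mod_lt _ (by norm_num))]

lemma Aback (a : Fin 3) (n : ℕ) (hn : 17 ≤ n) : prepend (phi a) Phi n = Phi (n - 17) := by
  unfold prepend
  rw [phi_len, if_neg (by omega)]

lemma SfA (a : Fin 3) (ha : a = 1 ∨ a = 2) : InfSquareFree (prepend (phi a) Phi) := by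
  rintro ⟨u, hu, m, hfac⟩
  set l := u.length with hlu
  have hl : 1 ≤ l := List.length_pos_iff.mpr hu
  have hlen2 : (u ++ u).length = l + l := by simp [hlu]
  have zone : ∀ i < l, prepend (phi a) Phi (m + i) = prepend (phi a) Phi (m + l + i) := by
    intro i hi
    have h1 := hfac i (by rw [hlen2]; omega)
    have h2 := hfac (l + i) (by rw [hlen2]; omega)
    have e1 : (u ++ u).getD i 0 = u.getD i 0 := List.getD_append _ _ _ _ (by omega)
    have e2 : (u ++ u).getD (l + i) 0 = u.getD i 0 := by
      rw [List.getD_append_right _ _ _ _ (by omega)]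
      congr 1
      omega
    rw [e1] at h1
    rw [e2] at h2
    rw [← h1, h2]
    congr 1
    omega
  rcases Nat.lt_or_ge m 17 with hm | hm
  case inr =>
    apply PhiSF l hl (m - 17)
    intro i hi
    have hthis := zone i hi
    rw [Aback a (m + i) (by omega), Aback a (m + l + i) (by omega)] at hthis
    have e1 : m + i - 17 = m - 17 + i := by omega
    have e2 : m + l + i - 17 = m - 17 + l + i := by omega
    rw [e1, e2] at hthis
    exact hthis
  · rcases Nat.lt_or_ge l 33 with hl33 | hl33
    · -- finite check
      have hzone : ∀ i < l, (phi a ++ Pk 2).getD (m + i) 0 = (phi a ++ Pk 2).getD (m + l + i) 0 := by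
        intro i hi
        rw [← A_getD a (m + i) (by omega), ← A_getD a (m + l + i) (by omega)]
        exact zone i hi
      have heq := take_eq_of_zone (phi a ++ Pk 2) m l
        (by rw [List.length_append, phi_len, Pk_len]; norm_num; omega) hzone
      exact C7 a ha m hm l hl33 hl heq
    · -- descent to PAP
      obtain ⟨s, hls, hz⟩ := desc (prepend [a] Phi) (prepend (phi a) Phi) (hyA a) m l hl33 zone
      have hm0 : m / 17 = 0 := by omega
      rw [hm0] at hz
      have hs2 : 2 ≤ s := by omega
      have x0 : prepend [a] Phi 0 = a := by unfold prepend; norm_num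
      have xk : ∀ k, 1 ≤ k → prepend [a] Phi k = Phi (k - 1) := by
        intro k hk
        unfold prepend
        rw [if_neg (by simp; omega)]
        simp
      apply PAP s (by omega) a ha
      · have := hz 0 (by omega)
        simp only [Nat.zero_add, Nat.add_zero] at this
        rw [x0, xk s (by omega)] at this
        exact this.symm
      · intro j hj
        have := hz (j + 1) (by omega)
        have e1 : 0 + (j + 1) = j + 1 := by omega
        have e2 : 0 + s + (j + 1) = s + j + 1 := by omega
        rw [e1, e2, xk (j + 1) (by omega), xk (s + j + 1) (by omega)] at this
        simp only [Nat.add_sub_cancel] at this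
        rwa [Nat.add_comm s j] at this

theorem suffix_prepend_squareFree (w : List (Fin 3)) (hne : w ≠ [])
    (hlen : w.length < 17) (hsuf : w <:+ phi 1 ∨ w <:+ phi 2) :
    InfSquareFree (prepend w Phi) := by
  have main : ∀ a : Fin 3, (a = 1 ∨ a = 2) → w <:+ phi a → InfSquareFree (prepend w Phi) := by
    intro a ha hsuf'
    obtain ⟨t, ht⟩ := hsuf'
    have hlw : t.length + w.length = 17 := by
      have := congrArg List.length ht
      rw [List.length_append, phi_len] at this
      omega
    set d := 17 - w.length with hd
    have htl : t.length = d := by omega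
    have key : ∀ n, prepend w Phi n = prepend (phi a) Phi (n + d) := by
      intro n
      unfold prepend
      rw [phi_len]
      rcases Nat.lt_or_ge n w.length with hc | hc
      · rw [if_pos hc, if_pos (by omega)]
        rw [← ht, List.getD_append_right _ _ _ _ (by omega)]
        congr 1
        omega
      · rw [if_neg (by omega), if_neg (by omega)]
        congr 1
        omega
    rintro ⟨u, hu, m, hfac⟩
    apply SfA a ha
    refine ⟨u, hu, m + d, ?_⟩
    intro i hi
    rw [hfac i hi, key (m + i)]
    congr 1
    omega
  rcases hsuf with h | h
  · exact main 1 (Or.inl rfl) h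
  · exact main 2 (Or.inr rfl) h
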